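/- The map on simple semisimple matrices fixing each eigenline and conjugating each eigenvalue, A = (ℓ | λ) ↦ (ℓ | conj(λ)) (same eigenlines ℓ_i, eigenvalues conj(λ_i)), agrees with A ↦ Φ(A)* where Φ(S N S^{−1}) := S^{−1} N S for S positive definite and N normal; i.e., for diagonalizable A with decomposition A = S N S^{−1}, the matrix (S^{−1} N S)* has the same eigenspaces as A with complex-conjugated eigenvalues. -/

import Mathlib

open Matrix
open scoped ComplexOrder

local notation "⟪" x ", " y "⟫" => @inner ℂ _ _ x y

/-- For a "normal" endomorphism, kernels of `T` and `adjoint T` agree. -/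
lemma aux_ker_adjoint {E : Type*} [NormedAddCommGroup E] [InnerProductSpace ℂ E]
    [FiniteDimensional ℂ E] (T : E →ₗ[ℂ] E)
    (h : LinearMap.adjoint T ∘ₗ T = T ∘ₗ LinearMap.adjoint T) (x : E) :
    T x = 0 ↔ LinearMap.adjoint T x = 0 := by
  have hc : LinearMap.adjoint T (T x) = T (LinearMap.adjoint T x) := by
    have := congrArg (fun f => f x) h
    simpa using this
  have key : ⟪T x, T x⟫ = ⟪LinearMap.adjoint T x, LinearMap.adjoint T x⟫ :=
    calc ⟪T x, T x⟫ = ⟪x, LinearMap.adjoint T (T x)⟫ :=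
            (LinearMap.adjoint_inner_right T x (T x)).symm
      _ = ⟪x, T (LinearMap.adjoint T x)⟫ := by rw [hc]
      _ = ⟪LinearMap.adjoint T x, LinearMap.adjoint T x⟫ :=
            (LinearMap.adjoint_inner_left T (LinearMap.adjoint T x) x).symm
  constructor
  · intro hx
    rw [← inner_self_eq_zero (𝕜 := ℂ), ← key, hx, inner_zero_left]
  · intro hx
    rw [← inner_self_eq_zero (𝕜 := ℂ), key, hx, inner_zero_left]

/-- Eigenvector equivalence for a normal matrix and its conjugate transpose,
at the level of `mulVec`. -/
lemma aux_normal (m : ℕ) (N : Matrix (Fin m) (Fin m) ℂ) (hN : Nᴴ * N = N * Nᴴ)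
    (μ : ℂ) (y : Fin m → ℂ) :
    Nᴴ *ᵥ y = (starRingEnd ℂ) μ • y ↔ N *ᵥ y = μ • y := by
  set M : Matrix (Fin m) (Fin m) ℂ := N - μ • 1 with hM
  have hMH : Mᴴ = Nᴴ - (starRingEnd ℂ) μ • 1 := by
    simp [hM, conjTranspose_sub, conjTranspose_smul]
  have hnormal : Mᴴ * M = M * Mᴴ := by
    rw [hMH, hM]
    simp only [Matrix.sub_mul, Matrix.mul_sub, Matrix.smul_mul, Matrix.mul_smul,
      Matrix.one_mul, Matrix.mul_one, hN, smul_smul, smul_sub]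
    rw [mul_comm μ ((starRingEnd ℂ) μ)]
    abel
  have hadj : LinearMap.adjoint (toEuclideanLin M) = toEuclideanLin Mᴴ :=
    (Matrix.toEuclideanLin_conjTranspose_eq_adjoint M).symm
  have hcomp : LinearMap.adjoint (toEuclideanLin M) ∘ₗ toEuclideanLin M
      = toEuclideanLin M ∘ₗ LinearMap.adjoint (toEuclideanLin M) := by
    rw [hadj]
    ext v
    simp [Matrix.toEuclideanLin_apply, Matrix.mulVec_mulVec, hnormal]
  set w : EuclideanSpace ℂ (Fin m) := (WithLp.equiv 2 (Fin m → ℂ)).symm y with hw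
  have hker := aux_ker_adjoint (toEuclideanLin M) hcomp w
  rw [hadj] at hker
  have e1 : toEuclideanLin M w = 0 ↔ N *ᵥ y = μ • y := by
    rw [Matrix.toEuclideanLin_apply, hw]
    change (WithLp.equiv 2 (Fin m → ℂ)).symm (M *ᵥ y) = 0 ↔ _
    constructor
    · intro h
      have h' : M *ᵥ y = 0 := by
        simpa using congrArg (WithLp.equiv 2 (Fin m → ℂ)) h
      rw [hM, Matrix.sub_mulVec, Matrix.smul_mulVec, Matrix.one_mulVec,
        sub_eq_zero] at h'
      exact h'
    · intro h
      have h' : M *ᵥ y = 0 := by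
        rw [hM, Matrix.sub_mulVec, Matrix.smul_mulVec, Matrix.one_mulVec,
          sub_eq_zero]
        exact h
      rw [h']
      simp
  have e2 : toEuclideanLin Mᴴ w = 0 ↔ Nᴴ *ᵥ y = (starRingEnd ℂ) μ • y := by
    rw [Matrix.toEuclideanLin_apply, hw]
    change (WithLp.equiv 2 (Fin m → ℂ)).symm (Mᴴ *ᵥ y) = 0 ↔ _
    constructor
    · intro h
      have h' : Mᴴ *ᵥ y = 0 := by
        simpa using congrArg (WithLp.equiv 2 (Fin m → ℂ)) h
      rw [hMH, Matrix.sub_mulVec, Matrix.smul_mulVec, Matrix.one_mulVec,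
        sub_eq_zero] at h'
      exact h'
    · intro h
      have h' : Mᴴ *ᵥ y = 0 := by
        rw [hMH, Matrix.sub_mulVec, Matrix.smul_mulVec, Matrix.one_mulVec,
          sub_eq_zero]
        exact h
      simp [h']
  rw [e1, e2] at hker
  exact hker.symm

theorem stmt18 (n : ℕ) (S N : Matrix (Fin n) (Fin n) ℂ)
    (hS : S.PosDef) (hN : Nᴴ * N = N * Nᴴ)
    (lam : Fin n → ℂ) (hlam : Function.Injective lam)
    (hne : ∀ i, Module.End.eigenspace (Matrix.toEuclideanLin (S * N * S⁻¹)) (lam i) ≠ ⊥) :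
    ∀ i, Module.End.eigenspace (Matrix.toEuclideanLin ((S⁻¹ * N * S)ᴴ))
        ((starRingEnd ℂ) (lam i))
      = Module.End.eigenspace (Matrix.toEuclideanLin (S * N * S⁻¹)) (lam i) := by
  intro i
  have hdet : IsUnit S.det := isUnit_iff_ne_zero.mpr (ne_of_gt hS.det_pos)
  have h1 : S * S⁻¹ = 1 := Matrix.mul_nonsing_inv S hdet
  have h2 : S⁻¹ * S = 1 := Matrix.nonsing_inv_mul S hdet
  have hSH : Sᴴ = S := hS.isHermitian
  have hSinvH : (S⁻¹)ᴴ = S⁻¹ := by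
    rw [Matrix.conjTranspose_nonsing_inv, hSH]
  have hrw : (S⁻¹ * N * S)ᴴ = S * Nᴴ * S⁻¹ := by
    rw [conjTranspose_mul, conjTranspose_mul, hSH, hSinvH, Matrix.mul_assoc]
  rw [hrw]
  ext v
  simp only [Module.End.mem_eigenspace_iff]
  set x : Fin n → ℂ := (WithLp.equiv 2 (Fin n → ℂ)) v with hx
  -- convert `toEuclideanLin` eigen-equations to `mulVec` eigen-equations
  have conv : ∀ (M : Matrix (Fin n) (Fin n) ℂ) (μ : ℂ),
      (toEuclideanLin M v = μ • v ↔ M *ᵥ x = μ • x) := by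
    intro M μ
    rw [Matrix.toEuclideanLin_apply]
    change (WithLp.equiv 2 (Fin n → ℂ)).symm (M *ᵥ x) = μ • v ↔ _
    rw [Equiv.symm_apply_eq]
    constructor
    · intro h; rw [h]; rfl
    · intro h; rw [h]; rfl
  rw [conv, conv]
  -- conjugation by S
  have conj_iff : ∀ (M : Matrix (Fin n) (Fin n) ℂ) (μ : ℂ),
      ((S * M * S⁻¹) *ᵥ x = μ • x ↔ M *ᵥ (S⁻¹ *ᵥ x) = μ • (S⁻¹ *ᵥ x)) := by
    intro M μ
    constructor
    · intro h
      have := congrArg (S⁻¹.mulVec) h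
      rw [Matrix.mulVec_mulVec, Matrix.mulVec_smul] at this
      have hmm : S⁻¹ * (S * M * S⁻¹) = M * S⁻¹ := by
        rw [show S * M * S⁻¹ = S * (M * S⁻¹) by rw [Matrix.mul_assoc],
          ← Matrix.mul_assoc, h2, Matrix.one_mul]
      rw [hmm, ← Matrix.mulVec_mulVec] at this
      exact this
    · intro h
      have := congrArg (S.mulVec) h
      rw [Matrix.mulVec_mulVec, Matrix.mulVec_mulVec, Matrix.mulVec_smul,
        Matrix.mulVec_mulVec, h1, Matrix.one_mulVec] at this
      exact this
  rw [conj_iff, conj_iff]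
  exact aux_normal n N hN (lam i) (S⁻¹ *ᵥ x)
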